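/- arXiv:1801.00847 — 2 statements merged into one kernel-verified Lean document; each statement's English description precedes it below -/
import Mathlib

section
/- Let $A \in \mathbb{R}^{m\times d}$, $y \in \mathbb{R}^m$, $\Gamma$ symmetric positive definite, and let $u^{(1)},\dots,u^{(J)} : \mathbb{R} \to \mathbb{R}^d$ be differentiable solutions of the coupled system $\frac{du^{(j)}}{dt} = \frac{1}{J}\sum_{k=1}^J \langle A(u^{(k)}-\bar u),\, y - Au^{(j)}\rangle_{\Gamma}\,(u^{(k)} - \bar u)$, where $\bar u(t) = \frac{1}{J}\sum_k u^{(k)}(t)$ and $\langle a,b\rangle_\Gamma = \langle \Gamma^{-1}a, b\rangle$. Then this system is equivalent to $\frac{du^{(j)}}{dt} = -C(u)\nabla\Phi(u^{(j)})$ with $C(u) = \frac{1}{J}\sum_k (u^{(k)}-\bar u)(u^{(k)}-\bar u)^T$ and $\Phi(u) = \frac{1}{2}\|\Gamma^{-1/2}(y-Au)\|^2$. -/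
open Matrix

/-- Noise-free linear continuous-time limit of EKI: the inner-product form of the
particle dynamics is equivalent to the preconditioned gradient flow
`du^{(j)}/dt = -C(u)∇Φ(u^{(j)})` with `C(u)` the empirical covariance and
`∇Φ(u) = -Aᵀ Γ⁻¹ (y - Au)`. -/
theorem eki_inner_product_form_iff_gradient_flow (m d J : ℕ)
    (A : Matrix (Fin m) (Fin d) ℝ) (y : Fin m → ℝ)
    (Γ : Matrix (Fin m) (Fin m) ℝ) (hΓ : Γ.PosDef)
    (u : Fin J → ℝ → (Fin d → ℝ))
    (ubar : ℝ → (Fin d → ℝ)) (hubar : ∀ t, ubar t = (1 / (J : ℝ)) • ∑ k, u k t)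
    (C : ℝ → Matrix (Fin d) (Fin d) ℝ)
    (hC : ∀ t, C t = (1 / (J : ℝ)) • ∑ k, vecMulVec (u k t - ubar t) (u k t - ubar t)) :
    (∀ j t, HasDerivAt (u j)
        ((1 / (J : ℝ)) • ∑ k,
          ((Γ⁻¹ *ᵥ (A *ᵥ (u k t - ubar t))) ⬝ᵥ (y - A *ᵥ u j t)) • (u k t - ubar t)) t)
      ↔
    (∀ j t, HasDerivAt (u j)
        (-(C t *ᵥ (-(Aᵀ *ᵥ (Γ⁻¹ *ᵥ (y - A *ᵥ u j t)))))) t) := by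
  have hΓinv : Γ⁻¹ᵀ = Γ⁻¹ := by
    have h := hΓ.isHermitian.inv
    rwa [Matrix.IsHermitian, Matrix.conjTranspose_eq_transpose_of_trivial] at h
  have key : ∀ j t,
      ((1 / (J : ℝ)) • ∑ k,
          ((Γ⁻¹ *ᵥ (A *ᵥ (u k t - ubar t))) ⬝ᵥ (y - A *ᵥ u j t)) • (u k t - ubar t))
        = -(C t *ᵥ (-(Aᵀ *ᵥ (Γ⁻¹ *ᵥ (y - A *ᵥ u j t))))) := by
    intro j t
    set r := y - A *ᵥ u j t with hr
    set w := Aᵀ *ᵥ (Γ⁻¹ *ᵥ r) with hw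
    have hdot : ∀ k, (Γ⁻¹ *ᵥ (A *ᵥ (u k t - ubar t))) ⬝ᵥ r = (u k t - ubar t) ⬝ᵥ w := by
      intro k
      symm
      rw [hw, Matrix.dotProduct_mulVec, Matrix.vecMul_transpose,
        Matrix.dotProduct_mulVec]
      conv_rhs => rw [← Matrix.vecMul_transpose, hΓinv]
    rw [Matrix.mulVec_neg, neg_neg, hC t, Matrix.smul_mulVec]
    simp only [hdot]
    congr 1
    funext i
    simp only [Finset.sum_apply, Pi.smul_apply, smul_eq_mul, Matrix.mulVec,
      dotProduct, Matrix.sum_apply, Matrix.vecMulVec_apply,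
      Finset.sum_mul, Finset.mul_sum]
    rw [Finset.sum_comm]
    exact Finset.sum_congr rfl fun k _ => Finset.sum_congr rfl fun l _ => by ring
  constructor <;> intro h j t
  · rw [← key]; exact h j t
  · rw [key]; exact h j t
end

section
/- Let $u^{(1)},\dots,u^{(J)} : \mathbb{R} \to \mathbb{R}^d$ be differentiable and satisfy a system of the form $\frac{du^{(j)}}{dt}(t) = \sum_{k=1}^J a_{jk}(t)\,(u^{(k)}(t) - \bar u(t))$ for continuous scalar functions $a_{jk}$, where $\bar u = \frac1J\sum_k u^{(k)}$. If at time $t = 0$ all $u^{(j)}(0)$ lie in a subspace $\mathcal{A} \subseteq \mathbb{R}^d$, then $u^{(j)}(t) \in \mathcal{A}$ for all $t \ge 0$ and all $j$. -/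
open Set

/-- Continuous-time subspace property: if each particle's velocity is a time-dependent
linear combination of the centered ensemble members and all particles start in a
subspace `𝒜`, then they remain in `𝒜` for all `t ≥ 0`. -/
theorem continuous_time_subspace_invariance (d J : ℕ)
    (𝒜 : Submodule ℝ (Fin d → ℝ))
    (u : Fin J → ℝ → (Fin d → ℝ))
    (ubar : ℝ → (Fin d → ℝ)) (hubar : ∀ t, ubar t = (1 / (J : ℝ)) • ∑ k, u k t)
    (a : Fin J → Fin J → ℝ → ℝ) (ha : ∀ j k, Continuous (a j k))
    (hode : ∀ j t, HasDerivAt (u j) (∑ k, a j k t • (u k t - ubar t)) t)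
    (h0 : ∀ j, u j 0 ∈ 𝒜) :
    ∀ j t, 0 ≤ t → u j t ∈ 𝒜 := by
  intro j T hT
  have hJ : (0:ℝ) < J := by
    have : J ≠ 0 := fun h => (h ▸ j).elim0
    exact_mod_cast Nat.pos_of_ne_zero this
  rw [← Subspace.forall_mem_dualAnnihilator_apply_eq_zero_iff]
  intro φ hφ
  -- φ as a continuous linear map
  let φ' : (Fin d → ℝ) →L[ℝ] ℝ := LinearMap.toContinuousLinearMap φ
  have hφ'eq : ∀ x, φ' x = φ x := fun _ => rfl
  have hφ0 : ∀ x ∈ 𝒜, φ x = 0 := fun x hx => (Submodule.mem_dualAnnihilator φ).mp hφ x hx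
  -- scalar projections
  set y : ℝ → Fin J → ℝ := fun s i => φ (u i s) with hy
  -- clamped coefficients
  set proj : ℝ → ℝ := fun s => max 0 (min s T) with hproj
  have hprojmem : ∀ s, proj s ∈ Icc 0 T := fun s =>
    ⟨le_max_left _ _, max_le (by exact hT) (min_le_right _ _)⟩
  set b : Fin J → Fin J → ℝ → ℝ := fun i k s => a i k (proj s) with hb
  -- uniform bound on coefficients on the clamped range
  have hg : Continuous fun s => ∑ i : Fin J, ∑ k : Fin J, |a i k s| := by
    continuity
  obtain ⟨C, hC⟩ := (isCompact_Icc (a := (0:ℝ)) (b := T)).exists_bound_of_continuousOn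
    hg.continuousOn
  have hbC : ∀ i k s, |b i k s| ≤ C := by
    intro i k s
    have h1 : |a i k (proj s)| ≤ ∑ i' : Fin J, ∑ k' : Fin J, |a i' k' (proj s)| := by
      calc |a i k (proj s)| ≤ ∑ k' : Fin J, |a i k' (proj s)| :=
            Finset.single_le_sum (f := fun k' => |a i k' (proj s)|)
              (fun k' _ => abs_nonneg _) (Finset.mem_univ k)
        _ ≤ ∑ i' : Fin J, ∑ k' : Fin J, |a i' k' (proj s)| :=
            Finset.single_le_sum (f := fun i' => ∑ k' : Fin J, |a i' k' (proj s)|)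
              (fun i' _ => Finset.sum_nonneg fun _ _ => abs_nonneg _) (Finset.mem_univ i)
    have h2 := hC (proj s) (hprojmem s)
    rw [Real.norm_eq_abs, abs_of_nonneg (Finset.sum_nonneg fun _ _ =>
      Finset.sum_nonneg fun _ _ => abs_nonneg _)] at h2
    exact h1.trans h2
  have hC0 : 0 ≤ C := le_trans (abs_nonneg _) (hbC j j 0)
  -- the vector field
  set F : ℝ → (Fin J → ℝ) → (Fin J → ℝ) :=
    fun s z i => ∑ k, b i k s * (z k - (1 / (J:ℝ)) * ∑ m, z m) with hF
  -- Lipschitz bound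
  set K : NNReal := (2 * C * J).toNNReal with hK
  have hlip : ∀ s, LipschitzWith K (F s) := by
    intro s
    apply LipschitzWith.of_dist_le_mul
    intro z w
    rw [dist_pi_le_iff (by positivity)]
    intro i
    have havg : |(1 / (J:ℝ)) * ∑ m, z m - (1 / (J:ℝ)) * ∑ m, w m| ≤ dist z w := by
      rw [← mul_sub, ← Finset.sum_sub_distrib, abs_mul, abs_of_nonneg (by positivity : (0:ℝ) ≤ 1 / (J:ℝ))]
      have h1 : |∑ m, (z m - w m)| ≤ ∑ _m : Fin J, dist z w := by
        refine (Finset.abs_sum_le_sum_abs _ _).trans (Finset.sum_le_sum fun m _ => ?_)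
        exact Real.dist_eq (z m) (w m) ▸ dist_le_pi_dist z w m
      rw [Finset.sum_const, Finset.card_univ, Fintype.card_fin, nsmul_eq_mul] at h1
      calc (1 / (J:ℝ)) * |∑ m, (z m - w m)| ≤ (1 / (J:ℝ)) * ((J:ℝ) * dist z w) := by
            apply mul_le_mul_of_nonneg_left h1 (by positivity)
        _ = dist z w := by field_simp
    have hterm : ∀ k, |b i k s * (z k - (1 / (J:ℝ)) * ∑ m, z m)
        - b i k s * (w k - (1 / (J:ℝ)) * ∑ m, w m)| ≤ C * (2 * dist z w) := by
      intro k
      rw [← mul_sub, abs_mul]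
      have hzk : |z k - w k| ≤ dist z w := Real.dist_eq (z k) (w k) ▸ dist_le_pi_dist z w k
      have h1 : |z k - (1 / (J:ℝ)) * ∑ m, z m - (w k - (1 / (J:ℝ)) * ∑ m, w m)|
          ≤ 2 * dist z w := by
        calc |z k - (1 / (J:ℝ)) * ∑ m, z m - (w k - (1 / (J:ℝ)) * ∑ m, w m)|
            = |(z k - w k) - ((1 / (J:ℝ)) * ∑ m, z m - (1 / (J:ℝ)) * ∑ m, w m)| := by ring_nf
          _ ≤ |z k - w k| + |(1 / (J:ℝ)) * ∑ m, z m - (1 / (J:ℝ)) * ∑ m, w m| := abs_sub _ _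
          _ ≤ dist z w + dist z w := add_le_add hzk havg
          _ = 2 * dist z w := by ring
      exact mul_le_mul (hbC i k s) h1 (abs_nonneg _) hC0
    have key : dist (F s z i) (F s w i) ≤ 2 * C * J * dist z w := by
      rw [Real.dist_eq, hF]
      simp only
      rw [← Finset.sum_sub_distrib]
      have h2 := (Finset.abs_sum_le_sum_abs
        (fun k => b i k s * (z k - (1 / (J:ℝ)) * ∑ m, z m)
          - b i k s * (w k - (1 / (J:ℝ)) * ∑ m, w m)) Finset.univ).trans
        (Finset.sum_le_sum fun k _ => hterm k)
      rw [Finset.sum_const, Finset.card_univ, Fintype.card_fin, nsmul_eq_mul] at h2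
      calc _ ≤ (J:ℝ) * (C * (2 * dist z w)) := h2
        _ = 2 * C * (J:ℝ) * dist z w := by ring
    calc dist (F s z i) (F s w i) ≤ 2 * C * J * dist z w := key
      _ = (K : ℝ) * dist z w := by
          rw [hK, Real.coe_toNNReal _ (by positivity)]
  -- y solves the ODE with vector field F on [0, T]
  have hyderiv : ∀ s, HasDerivAt y (fun i => φ (∑ k, a i k s • (u k s - ubar s))) s := by
    intro s
    rw [hasDerivAt_pi]
    intro i
    exact (φ'.hasFDerivAt.comp_hasDerivAt s (hode i s))
  have hyval : ∀ s, ∀ i, φ (∑ k, a i k s • (u k s - ubar s))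
      = ∑ k, a i k s * (y s k - (1 / (J:ℝ)) * ∑ m, y s m) := by
    intro s i
    rw [map_sum]
    apply Finset.sum_congr rfl
    intro k _
    rw [map_smul, map_sub, smul_eq_mul]
    congr 1
    congr 1
    rw [hubar, map_smul, map_sum, smul_eq_mul]
  have hF_on : ∀ s ∈ Ico 0 T, F s (y s) = fun i => φ (∑ k, a i k s • (u k s - ubar s)) := by
    intro s hs
    funext i
    rw [hyval s i, hF]
    simp only
    apply Finset.sum_congr rfl
    intro k _
    have : proj s = s := by
      rw [hproj]
      simp only
      rw [min_eq_left (le_of_lt hs.2), max_eq_right hs.1]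
    rw [hb]
    simp only [this]
  have hycont : Continuous y := by
    apply continuous_pi
    intro i
    have : Differentiable ℝ (fun s => y s i) := fun s =>
      ((hasDerivAt_pi.mp (hyderiv s)) i).differentiableAt
    exact this.continuous
  -- zero is a solution
  have hF0 : ∀ s, F s 0 = 0 := by
    intro s
    funext i
    rw [hF]
    simp
  -- uniqueness
  have heq : EqOn y (fun _ => (0 : Fin J → ℝ)) (Icc 0 T) := by
    apply ODE_solution_unique hlip
    · exact hycont.continuousOn
    · intro s hs
      have := (hyderiv s).hasDerivWithinAt (s := Ici s)
      rw [hF_on s hs]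
      exact this
    · exact continuousOn_const
    · intro s hs
      rw [hF0 s]
      exact hasDerivWithinAt_const s _ 0
    · funext i
      exact hφ0 _ (h0 i)
  have := congrFun (heq (right_mem_Icc.mpr hT)) j
  exact this
end
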